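/- Let R₁, R₂ ⊆ V × V and α₁, α₂ ∈ [0,1]. Then the composition of lifted relations satisfies (R₁)†_{α₁} ∘ (R₂)†_{α₂} ⊆ (R₁ ∘ R₂)†_{α₁ ⊗ α₂}, where ⊗ is the underlying left-continuous t-norm. -/
import Mathlib


open unitInterval

instance : Fact ((0:ℝ) ≤ 1) := ⟨zero_le_one⟩

/-- A left-continuous t-norm on the unit interval. -/
structure LCTNorm where
  mul : unitInterval → unitInterval → unitInterval
  mul_comm : ∀ s t, mul s t = mul t s
  mul_assoc : ∀ r s t, mul r (mul s t) = mul (mul r s) t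
  mul_mono : ∀ r s t, r ≤ s → mul r t ≤ mul s t
  mul_one : ∀ s, mul s 1 = s
  left_cont : ∀ (r : unitInterval) (S : Set unitInterval), mul r (sSup S) = sSup (mul r '' S)

/-- The residuum `t → r` of a left-continuous t-norm. -/
noncomputable def LCTNorm.res (T : LCTNorm) (t r : unitInterval) : unitInterval :=
  sSup {s | T.mul s t ≤ r}
variable {V : Type*}

/-- The lifting function S̃(p, q, R). -/
noncomputable def Stilde [Fintype V] (T : LCTNorm) (R : Set (V × V))
    (p q : V → unitInterval) : unitInterval :=
  ⨅ u : V,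
    (T.res (p u) (⨆ v ∈ {v | (u, v) ∈ R}, q v) ⊓
     T.res (q u) (⨆ v ∈ {v | (v, u) ∈ R}, p v))

/-- The lifted relation `R†_α`. -/
noncomputable def lift [Fintype V] (T : LCTNorm) (α : unitInterval) (R : Set (V × V)) :
    Set ((V → unitInterval) × (V → unitInterval)) :=
  {pq | α ≤ Stilde T R pq.1 pq.2}

/-- Relational composition of subsets of products. -/
def relComp {X Y Z : Type*} (R₁ : Set (X × Y)) (R₂ : Set (Y × Z)) : Set (X × Z) :=
  {uw | ∃ v, (uw.1, v) ∈ R₁ ∧ (v, uw.2) ∈ R₂}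

namespace LCTNorm

lemma mul_mono_right (T : LCTNorm) (r : unitInterval) {s t : unitInterval} (h : s ≤ t) :
    T.mul r s ≤ T.mul r t := by
  rw [T.mul_comm r s, T.mul_comm r t]; exact T.mul_mono _ _ _ h

lemma mul_res_le (T : LCTNorm) (t r : unitInterval) : T.mul (T.res t r) t ≤ r := by
  rw [T.mul_comm, res, T.left_cont]
  apply sSup_le
  rintro _ ⟨s, hs, rfl⟩
  rw [T.mul_comm]; exact hs

lemma le_res_iff (T : LCTNorm) {s t r : unitInterval} :
    s ≤ T.res t r ↔ T.mul s t ≤ r := by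
  constructor
  · intro h; exact le_trans (T.mul_mono _ _ _ h) (T.mul_res_le t r)
  · intro h; exact le_sSup h

lemma res_mono (T : LCTNorm) {t r r' : unitInterval} (h : r ≤ r') : T.res t r ≤ T.res t r' :=
  sSup_le_sSup fun s hs => le_trans hs h

end LCTNorm

/-- Composition of lifted relations. -/
theorem lift_comp [Fintype V] [Nonempty V] (T : LCTNorm) (R₁ R₂ : Set (V × V))
    (α₁ α₂ : unitInterval) :
    relComp (lift T α₁ R₁) (lift T α₂ R₂) ⊆ lift T (T.mul α₁ α₂) (relComp R₁ R₂) := by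
  rintro ⟨p, r⟩ ⟨q, hq1, hq2⟩
  simp only [lift, Stilde, Set.mem_setOf_eq] at hq1 hq2 ⊢
  apply le_iInf
  intro u
  apply le_inf
  · rw [T.le_res_iff]
    have h1 : α₁ ≤ T.res (p u) (⨆ v ∈ {v | (u, v) ∈ R₁}, q v) :=
      le_trans (le_trans hq1 (iInf_le _ u)) inf_le_left
    calc T.mul (T.mul α₁ α₂) (p u)
        = T.mul α₂ (T.mul α₁ (p u)) := by rw [T.mul_comm α₁ α₂, T.mul_assoc]
      _ ≤ T.mul α₂ (⨆ v ∈ {v | (u, v) ∈ R₁}, q v) :=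
          T.mul_mono_right _ (T.le_res_iff.mp h1)
      _ ≤ ⨆ w ∈ {w | (u, w) ∈ relComp R₁ R₂}, r w := by
          rw [← sSup_image, T.left_cont]
          apply sSup_le
          rintro _ ⟨_, ⟨v, hv, rfl⟩, rfl⟩
          have h2 : α₂ ≤ T.res (q v) (⨆ w ∈ {w | (v, w) ∈ R₂}, r w) :=
            le_trans (le_trans hq2 (iInf_le _ v)) inf_le_left
          have hle : (⨆ w ∈ {w | (v, w) ∈ R₂}, r w)
              ≤ ⨆ w ∈ {w | (u, w) ∈ relComp R₁ R₂}, r w :=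
            iSup₂_le fun w hw => le_iSup₂ (f := fun w _ => r w) w ⟨v, hv, hw⟩
          have := le_trans h2 (T.res_mono hle)
          rw [T.le_res_iff] at this
          exact this
  · rw [T.le_res_iff]
    have h1 : α₂ ≤ T.res (r u) (⨆ v ∈ {v | (v, u) ∈ R₂}, q v) :=
      le_trans (le_trans hq2 (iInf_le _ u)) inf_le_right
    calc T.mul (T.mul α₁ α₂) (r u)
        = T.mul α₁ (T.mul α₂ (r u)) := by rw [T.mul_assoc]
      _ ≤ T.mul α₁ (⨆ v ∈ {v | (v, u) ∈ R₂}, q v) :=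
          T.mul_mono_right _ (T.le_res_iff.mp h1)
      _ ≤ ⨆ w ∈ {w | (w, u) ∈ relComp R₁ R₂}, p w := by
          rw [← sSup_image, T.left_cont]
          apply sSup_le
          rintro _ ⟨_, ⟨v, hv, rfl⟩, rfl⟩
          have h2 : α₁ ≤ T.res (q v) (⨆ w ∈ {w | (w, v) ∈ R₁}, p w) :=
            le_trans (le_trans hq1 (iInf_le _ v)) inf_le_right
          have hle : (⨆ w ∈ {w | (w, v) ∈ R₁}, p w)
              ≤ ⨆ w ∈ {w | (w, u) ∈ relComp R₁ R₂}, p w :=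
            iSup₂_le fun w hw => le_iSup₂ (f := fun w _ => p w) w ⟨v, hw, hv⟩
          have := le_trans h2 (T.res_mono hle)
          rw [T.le_res_iff] at this
          exact this
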